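/- Assume r*m/2 > 1 and r*c ≤ 1. Define φ : ℤ → ℝ by φ_i = 1 for i ≤ 0 and φ_i = 0 for i ≥ 1. Then (G φ)_i = φ_{i-1} for every i ∈ ℤ; consequently (G^{(t)} φ)_i = φ_{i-t} for every t ≥ 0, i.e. φ is a traveling front of speed one, for every critical density c with r*c ≤ 1. -/
import Mathlib


/-- The piecewise linear reproduction function `g(u) = r u` for `u < c`, `g(u) = 1` for `u ≥ c`. -/
noncomputable def g (r c u : ℝ) : ℝ := if u < c then r * u else 1

/-- The generational map `G`: migration followed by reproduction. -/
noncomputable def G (r c m : ℝ) (u : ℤ → ℝ) : ℤ → ℝ :=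
  fun i => g r c (m / 2 * u (i - 1) + (1 - m) * u i + m / 2 * u (i + 1))

theorem stmt_11 (r c m : ℝ) (hr : 0 < r) (hc : 0 < c) (hm0 : 0 < m) (hm1 : m < 1)
    (hrm : 1 < r * m / 2) (hrc : r * c ≤ 1)
    (φ : ℤ → ℝ) (hφ : ∀ i : ℤ, φ i = if i ≤ 0 then 1 else 0) :
    (∀ i : ℤ, G r c m φ i = φ (i - 1)) ∧
      ∀ t : ℕ, ∀ i : ℤ, (G r c m)^[t] φ i = φ (i - t) := by
  have hc2 : c < m / 2 := by nlinarith
  have key : ∀ (k : ℤ) (u : ℤ → ℝ), (∀ j, u j = φ (j - k)) →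
      ∀ i, G r c m u i = φ (i - k - 1) := by
    intro k u hu i
    simp only [G, hu, hφ]
    rcases (show i ≤ k - 1 ∨ i = k ∨ i = k + 1 ∨ k + 2 ≤ i by omega) with h | h | h | h
    · have e1 : i - 1 - k ≤ 0 := by omega
      have e2 : i - k ≤ 0 := by omega
      have e3 : i + 1 - k ≤ 0 := by omega
      have e4 : i - k - 1 ≤ 0 := by omega
      simp only [if_pos e1, if_pos e2, if_pos e3, if_pos e4, g]
      rw [if_neg (by nlinarith)]
    · have e1 : i - 1 - k ≤ 0 := by omega
      have e2 : i - k ≤ 0 := by omega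
      have e3 : ¬ i + 1 - k ≤ 0 := by omega
      have e4 : i - k - 1 ≤ 0 := by omega
      simp only [if_pos e1, if_pos e2, if_neg e3, if_pos e4, g]
      rw [if_neg (by nlinarith)]
    · have e1 : i - 1 - k ≤ 0 := by omega
      have e2 : ¬ i - k ≤ 0 := by omega
      have e3 : ¬ i + 1 - k ≤ 0 := by omega
      have e4 : i - k - 1 ≤ 0 := by omega
      simp only [if_pos e1, if_neg e2, if_neg e3, if_pos e4, g]
      rw [if_neg (by nlinarith)]
    · have e1 : ¬ i - 1 - k ≤ 0 := by omega
      have e2 : ¬ i - k ≤ 0 := by omega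
      have e3 : ¬ i + 1 - k ≤ 0 := by omega
      have e4 : ¬ i - k - 1 ≤ 0 := by omega
      simp only [if_neg e1, if_neg e2, if_neg e3, if_neg e4, g]
      rw [if_pos (by nlinarith)]
      ring
  have first : ∀ i : ℤ, G r c m φ i = φ (i - 1) := by
    intro i
    have := key 0 φ (fun j => by rw [sub_zero]) i
    rwa [sub_zero] at this
  refine ⟨first, ?_⟩
  intro t
  induction t with
  | zero => intro i; simp
  | succ n ih =>
    intro i
    rw [Function.iterate_succ_apply']
    have := key (n : ℤ) ((G r c m)^[n] φ) ih i
    rw [this]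
    congr 1
    push_cast
    ring
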